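/- Let α > −1. There is a constant C_α > 0 (depending only on α) such that for all z, ξ in the upper half plane ℋ, the kernel estimate 1/|z − ξ̄|^{2+α} ≤ C_α Σ_{β ∈ {0,1/3}} Σ_{I ∈ 𝒟^β} 1_{Q_I}(z) 1_{Q_I}(ξ) / |I|^{2+α} holds. -/

import Mathlib

open MeasureTheory

noncomputable section

/-- The Carleson box `Q_{[a,b)} = [a,b) × (0, b-a]` in the upper half plane. -/
def cbox (a b : ℝ) : Set ℂ := {z | a ≤ z.re ∧ z.re < b ∧ 0 < z.im ∧ z.im ≤ b - a}

/-- The interval of the shifted dyadic grid `𝒟^β` with parameters `j, m`. -/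
def gridbox (β : ℝ) (j m : ℤ) : Set ℂ :=
  cbox ((2:ℝ)^j * ((m : ℝ) + (-1:ℝ)^j * β)) ((2:ℝ)^j * ((m : ℝ) + 1 + (-1:ℝ)^j * β))

/-- The dyadic kernel `K^β_α(z,ξ) = Σ_{I ∈ 𝒟^β} 1_{Q_I}(z) 1_{Q_I}(ξ) / |I|^{2+α}`. -/
def dyadicKernel (α β : ℝ) (z ξ : ℂ) : ℝ :=
  ∑' (j : ℤ) (m : ℤ),
    (gridbox β j m).indicator (fun _ => (1:ℝ)) z * (gridbox β j m).indicator (fun _ => (1:ℝ)) ξ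
      / ((2:ℝ)^j) ^ (2 + α)

lemma mem_gridbox_iff {β : ℝ} {j m : ℤ} {w : ℂ} :
    w ∈ gridbox β j m ↔
      ⌊w.re / (2:ℝ)^j - (-1:ℝ)^j * β⌋ = m ∧ 0 < w.im ∧ w.im ≤ (2:ℝ)^j := by
  have h2 : (0:ℝ) < (2:ℝ)^j := by positivity
  have hba : (2:ℝ)^j * ((m:ℝ)+1+(-1:ℝ)^j*β) - (2:ℝ)^j * ((m:ℝ)+(-1:ℝ)^j*β) = (2:ℝ)^j := by ring
  have key : ((2:ℝ)^j * ((m:ℝ) + (-1:ℝ)^j * β) ≤ w.re ∧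
        w.re < (2:ℝ)^j * ((m:ℝ) + 1 + (-1:ℝ)^j * β))
      ↔ ⌊w.re / (2:ℝ)^j - (-1:ℝ)^j * β⌋ = m := by
    rw [Int.floor_eq_iff, le_sub_iff_add_le, le_div_iff₀ h2, sub_lt_iff_lt_add, div_lt_iff₀ h2]
    constructor <;> rintro ⟨a, c⟩ <;> constructor <;> nlinarith
  simp only [gridbox, cbox, Set.mem_setOf_eq]
  constructor
  · rintro ⟨h1, h2', h3, h4⟩
    exact ⟨key.1 ⟨h1, h2'⟩, h3, by linarith⟩
  · rintro ⟨h1, h3, h4⟩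
    obtain ⟨ha, hb⟩ := key.2 h1
    exact ⟨ha, hb, h3, by linarith⟩

lemma floor_squeeze {x y u : ℝ} (h1 : x ≤ u) (h2 : u ≤ y) (h : ⌊x⌋ = ⌊y⌋) : ⌊u⌋ = ⌊x⌋ :=
  le_antisymm (h ▸ Int.floor_le_floor h2) (Int.floor_le_floor h1)

lemma floor_trick {x y t : ℝ} (hxy : x ≤ y) (h : y - x < 1/3)
    (ht : t = 1/3 ∨ t = -(1/3)) :
    ⌊x⌋ = ⌊y⌋ ∨ ⌊x - t⌋ = ⌊y - t⌋ := by
  by_contra hc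
  push_neg at hc
  obtain ⟨h1, h2⟩ := hc
  have hf1 : ⌊x⌋ < ⌊y⌋ := lt_of_le_of_ne (Int.floor_le_floor hxy) h1
  have hf2 : ⌊x - t⌋ < ⌊y - t⌋ := lt_of_le_of_ne (Int.floor_le_floor (by linarith)) h2
  set n := ⌊y⌋ with hn
  set m := ⌊y - t⌋ with hm
  have hn1 : x < (n:ℝ) := by
    have hx1 := Int.lt_floor_add_one x
    have : ((⌊x⌋:ℝ) + 1) ≤ (n:ℝ) := by exact_mod_cast hf1
    linarith
  have hn2 : (n:ℝ) ≤ y := Int.floor_le y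
  have hm1 : x - t < (m:ℝ) := by
    have hx1 := Int.lt_floor_add_one (x - t)
    have : ((⌊x - t⌋:ℝ) + 1) ≤ (m:ℝ) := by exact_mod_cast hf2
    linarith
  have hm2 : (m:ℝ) ≤ y - t := Int.floor_le _
  have hlt : |(n:ℝ) - ((m:ℝ) + t)| < 1/3 := by
    rw [abs_lt]; constructor <;> linarith
  have htabs : |t| = 1/3 := by rcases ht with rfl | rfl <;> norm_num
  rcases eq_or_ne n m with he | hne
  · have hc : (n:ℝ) = (m:ℝ) := by exact_mod_cast he
    have he2 : |(n:ℝ) - ((m:ℝ) + t)| = |t| := by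
      rw [← hc, show (n:ℝ) - ((n:ℝ) + t) = -t by ring, abs_neg]
    rw [he2, htabs] at hlt
    linarith
  · have h1' : (1:ℝ) ≤ |(n:ℝ) - (m:ℝ)| := by
      have h0 : (1:ℤ) ≤ |n - m| := Int.one_le_abs (sub_ne_zero.2 hne)
      exact_mod_cast h0
    have habs : |(n:ℝ) - (m:ℝ)| - |t| ≤ |(n:ℝ) - ((m:ℝ) + t)| := by
      have h3 := abs_sub_abs_le_abs_sub ((n:ℝ) - (m:ℝ)) t
      have heq : ((n:ℝ) - (m:ℝ)) - t = (n:ℝ) - ((m:ℝ) + t) := by ring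
      rw [heq] at h3
      exact h3
    linarith

lemma zpow_rpow_comm (s : ℝ) (j : ℤ) : ((2:ℝ)^j)^s = ((2:ℝ)^s)^j := by
  rw [← Real.rpow_intCast 2 j, ← Real.rpow_mul (by norm_num), mul_comm,
    Real.rpow_mul (by norm_num), Real.rpow_intCast]

lemma dyadicKernel_nonneg (α β : ℝ) (z ξ : ℂ) : 0 ≤ dyadicKernel α β z ξ := by
  refine tsum_nonneg fun j => tsum_nonneg fun m => ?_
  refine div_nonneg (mul_nonneg ?_ ?_) (by positivity) <;>
    exact Set.indicator_nonneg (fun _ _ => zero_le_one) _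

lemma kernel_lower (α β : ℝ) (hs : (0:ℝ) < 2 + α) (z ξ : ℂ) (j m : ℤ)
    (hz : z ∈ gridbox β j m) (hξ : ξ ∈ gridbox β j m) :
    1 / ((2:ℝ)^j)^(2+α) ≤ dyadicKernel α β z ξ := by
  have hb1 : (1:ℝ) < (2:ℝ)^(2+α) :=
    (Real.one_lt_rpow_iff_of_pos (by norm_num)).2 (Or.inl ⟨one_lt_two, hs⟩)
  have hb0 : (0:ℝ) < (2:ℝ)^(2+α) := lt_trans one_pos hb1
  set b : ℝ := (2:ℝ)^(2+α) with hbdef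
  set F : ℤ → ℤ → ℝ := fun j' m' =>
    (gridbox β j' m').indicator (fun _ => (1:ℝ)) z *
      (gridbox β j' m').indicator (fun _ => (1:ℝ)) ξ / ((2:ℝ)^j') ^ (2 + α) with hFdef
  have hker : dyadicKernel α β z ξ = ∑' (j' : ℤ), ∑' (m' : ℤ), F j' m' := rfl
  have hind01 : ∀ (S : Set ℂ) (w : ℂ), 0 ≤ S.indicator (fun _ => (1:ℝ)) w ∧
      S.indicator (fun _ => (1:ℝ)) w ≤ 1 := by
    intro S w
    refine ⟨Set.indicator_nonneg (fun _ _ => zero_le_one) _, ?_⟩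
    classical
    by_cases h : w ∈ S
    · rw [Set.indicator_of_mem h]
    · rw [Set.indicator_of_notMem h]; norm_num
  have hFnn : ∀ j' m', 0 ≤ F j' m' := fun j' m' =>
    div_nonneg (mul_nonneg (hind01 _ _).1 (hind01 _ _).1) (by positivity)
  have hF1 : ∀ j' m', F j' m' ≤ 1 / ((2:ℝ)^j')^(2+α) := by
    intro j' m'
    have hd : (0:ℝ) < ((2:ℝ)^j')^(2+α) := by positivity
    exact div_le_div₀ zero_le_one
      (mul_le_one₀ (hind01 _ _).2 (hind01 _ _).1 (hind01 _ _).2) hd le_rfl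
  have hFz : ∀ j' m', z ∉ gridbox β j' m' → F j' m' = 0 := by
    intro j' m' h
    simp [hFdef, Set.indicator_of_notMem h]
  have hzero : ∀ j', ∀ m', m' ≠ ⌊z.re/(2:ℝ)^j' - (-1:ℝ)^j' * β⌋ → F j' m' = 0 := by
    intro j' m' hm'
    by_cases h : z ∈ gridbox β j' m'
    · exact absurd (mem_gridbox_iff.1 h).1.symm hm'
    · exact hFz _ _ h
  have hgval : ∀ j', (∑' m', F j' m') = F j' ⌊z.re/(2:ℝ)^j' - (-1:ℝ)^j' * β⌋ :=
    fun j' => tsum_eq_single _ (hzero j')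
  have hzim : 0 < z.im := (mem_gridbox_iff.1 hz).2.1
  obtain ⟨j1, hj1l, hj1r⟩ := exists_mem_Ico_zpow hzim one_lt_two
  set H : ℤ → ℝ := fun j' => if j1 ≤ j' then (b⁻¹)^j' else 0 with hHdef
  have hbound : ∀ j', (∑' m', F j' m') ≤ H j' := by
    intro j'
    rw [hgval]
    by_cases hcut : j1 ≤ j'
    · have heq : (1:ℝ) / ((2:ℝ)^j')^(2+α) = (b⁻¹)^j' := by
        rw [zpow_rpow_comm (2+α) j', one_div, ← inv_zpow]
      simp only [hHdef, if_pos hcut]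
      rw [← heq]
      exact hF1 _ _
    · have hnot : z ∉ gridbox β j' ⌊z.re/(2:ℝ)^j' - (-1:ℝ)^j' * β⌋ := by
        intro hmem
        have him := (mem_gridbox_iff.1 hmem).2.2
        have hle : (2:ℝ)^j1 ≤ (2:ℝ)^j' := le_trans hj1l him
        exact hcut ((zpow_le_zpow_iff_right₀ one_lt_two).1 hle)
      rw [hFz _ _ hnot]
      simp only [hHdef, if_neg hcut, le_refl]
  have hr0 : (0:ℝ) < b⁻¹ := inv_pos.2 hb0
  have hr1 : b⁻¹ < 1 := inv_lt_one_of_one_lt₀ hb1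
  have hHsum : Summable H := by
    have hinj : Function.Injective (fun n : ℕ => j1 + (n:ℤ)) := by
      intro a c h
      simpa using h
    have hvan : ∀ x ∉ Set.range (fun n : ℕ => j1 + (n:ℤ)), H x = 0 := by
      intro x hx
      simp only [hHdef]
      rw [if_neg]
      intro hle
      exact hx ⟨(x - j1).toNat, by show j1 + ((x - j1).toNat : ℤ) = x; omega⟩
    refine (hinj.summable_iff hvan).1 ?_
    have heq : ∀ n : ℕ, (H ∘ fun n : ℕ => j1 + (n:ℤ)) n = (b⁻¹)^j1 * (b⁻¹)^n := by
      intro n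
      simp only [Function.comp, hHdef]
      rw [if_pos (le_add_of_nonneg_right (Int.natCast_nonneg n))]
      rw [zpow_add₀ (ne_of_gt hr0), zpow_natCast]
    exact Summable.congr ((summable_geometric_of_lt_one hr0.le hr1).mul_left ((b⁻¹)^j1))
      (fun n => (heq n).symm)
  have hgsum : Summable (fun j' => ∑' m', F j' m') :=
    hHsum.of_nonneg_of_le (fun j' => tsum_nonneg (hFnn j')) hbound
  have hmain : (∑' m', F j m') ≤ dyadicKernel α β z ξ := by
    rw [hker]
    exact Summable.le_tsum hgsum j (fun j' _ => tsum_nonneg (hFnn j'))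
  have hfm : ⌊z.re/(2:ℝ)^j - (-1:ℝ)^j * β⌋ = m := (mem_gridbox_iff.1 hz).1
  have hgj : (∑' m', F j m') = 1 / ((2:ℝ)^j)^(2+α) := by
    rw [hgval, hfm]
    simp only [hFdef]
    rw [Set.indicator_of_mem hz, Set.indicator_of_mem hξ, one_mul]
  linarith [hmain, hgj.le, hgj.ge]

theorem kernel_dominated_by_dyadic (α : ℝ) (hα : -1 < α) :
    ∃ C > 0, ∀ z ξ : ℂ, 0 < z.im → 0 < ξ.im →
      1 / ‖z - (starRingEnd ℂ) ξ‖ ^ (2 + α) ≤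
        C * (dyadicKernel α 0 z ξ + dyadicKernel α (1/3) z ξ) := by
  have hs : (0:ℝ) < 2 + α := by linarith
  refine ⟨(8:ℝ)^(2+α), Real.rpow_pos_of_pos (by norm_num) _, ?_⟩
  intro z ξ hz hξ
  set A : ℝ := ‖z - (starRingEnd ℂ) ξ‖ with hAdef
  set D : ℝ := max (max |z.re - ξ.re| z.im) ξ.im with hDdef
  have hD0 : 0 < D := lt_of_lt_of_le hξ (le_max_right _ _)
  have hDz : z.im ≤ D := le_trans (le_max_right _ _) (le_max_left _ _)
  have hDξ : ξ.im ≤ D := le_max_right _ _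
  have hDre : |z.re - ξ.re| ≤ D := le_trans (le_max_left _ _) (le_max_left _ _)
  have hDA : D ≤ A := by
    have hre : |z.re - ξ.re| ≤ A := by
      have h1 : (z - (starRingEnd ℂ) ξ).re = z.re - ξ.re := by
        simp [Complex.sub_re, Complex.conj_re]
      calc |z.re - ξ.re| = |(z - (starRingEnd ℂ) ξ).re| := by rw [h1]
        _ ≤ A := Complex.abs_re_le_norm _
    have him : (z - (starRingEnd ℂ) ξ).im = z.im + ξ.im := by
      simp [Complex.sub_im, Complex.conj_im]
    have himA : z.im + ξ.im ≤ A := by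
      calc z.im + ξ.im = |(z - (starRingEnd ℂ) ξ).im| := by
            rw [him, abs_of_pos (by linarith)]
        _ ≤ A := Complex.abs_im_le_norm _
    refine max_le (max_le hre ?_) ?_ <;> linarith
  have hA0 : 0 < A := lt_of_lt_of_le hD0 hDA
  obtain ⟨j0, hj0l, hj0r⟩ := exists_mem_Ico_zpow (show (0:ℝ) < 4*D by linarith) one_lt_two
  set j : ℤ := j0 + 1 with hjdef
  have h2j : (0:ℝ) < (2:ℝ)^j := by positivity
  have hj1 : 4 * D < (2:ℝ)^j := hj0r
  have hj2 : (2:ℝ)^j ≤ 8 * D := by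
    have h : (2:ℝ)^j = 2 * (2:ℝ)^j0 := by rw [hjdef, zpow_add_one₀ (by norm_num : (2:ℝ) ≠ 0)]; ring
    nlinarith
  set x : ℝ := min z.re ξ.re / (2:ℝ)^j with hxdef
  set y : ℝ := max z.re ξ.re / (2:ℝ)^j with hydef
  have hxy : x ≤ y := by
    rw [hxdef, hydef]; gcongr; exact min_le_max
  have hyx : y - x < 1/3 := by
    have h1 : y - x = |z.re - ξ.re| / (2:ℝ)^j := by
      rw [hydef, hxdef, div_sub_div_same, max_sub_min_eq_abs, abs_sub_comm]
    rw [h1, div_lt_iff₀ h2j]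
    nlinarith
  have hσ : (-1:ℝ)^j = 1 ∨ (-1:ℝ)^j = -1 := by
    rcases Int.even_or_odd j with he | ho
    · exact Or.inl (Even.neg_one_zpow he)
    · exact Or.inr (Odd.neg_one_zpow ho)
  have ht : (-1:ℝ)^j * (1/3) = 1/3 ∨ (-1:ℝ)^j * (1/3) = -(1/3) := by
    rcases hσ with h | h <;> rw [h] <;> norm_num
  -- the final arithmetic step, shared by both cases
  have h8A : ((2:ℝ)^j)^(2+α) ≤ (8:ℝ)^(2+α) * A^(2+α) := by
    rw [← Real.mul_rpow (by norm_num) hA0.le]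
    exact Real.rpow_le_rpow h2j.le (by linarith) hs.le
  have hstep : 1/A^(2+α) ≤ (8:ℝ)^(2+α) * (1/((2:ℝ)^j)^(2+α)) := by
    rw [mul_one_div, div_le_div_iff₀ (by positivity) (by positivity), one_mul]
    exact h8A
  have h8 : (0:ℝ) < (8:ℝ)^(2+α) := Real.rpow_pos_of_pos (by norm_num) _
  rcases floor_trick hxy (by linarith) ht with hfl | hfl
  · -- grid β = 0 works
    have hm : ∀ w : ℂ, 0 < w.im → w.im ≤ (2:ℝ)^j → min z.re ξ.re ≤ w.re →
        w.re ≤ max z.re ξ.re → w ∈ gridbox 0 j ⌊x⌋ := by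
      intro w hw1 hw2 hw3 hw4
      rw [mem_gridbox_iff]
      refine ⟨?_, hw1, hw2⟩
      rw [mul_zero, sub_zero]
      refine floor_squeeze ?_ ?_ hfl
      · rw [hxdef]; gcongr
      · rw [hydef]; gcongr
    have hzmem := hm z hz (by linarith) (min_le_left _ _) (le_max_left _ _)
    have hξmem := hm ξ hξ (by linarith) (min_le_right _ _) (le_max_right _ _)
    have hlow := kernel_lower α 0 hs z ξ j ⌊x⌋ hzmem hξmem
    have hnn := dyadicKernel_nonneg α (1/3) z ξ
    calc 1 / A^(2+α) ≤ (8:ℝ)^(2+α) * (1/((2:ℝ)^j)^(2+α)) := hstep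
      _ ≤ (8:ℝ)^(2+α) * (dyadicKernel α 0 z ξ + dyadicKernel α (1/3) z ξ) := by
          nlinarith
  · -- grid β = 1/3 works
    have hm : ∀ w : ℂ, 0 < w.im → w.im ≤ (2:ℝ)^j → min z.re ξ.re ≤ w.re →
        w.re ≤ max z.re ξ.re → w ∈ gridbox (1/3) j ⌊x - (-1:ℝ)^j * (1/3)⌋ := by
      intro w hw1 hw2 hw3 hw4
      rw [mem_gridbox_iff]
      refine ⟨?_, hw1, hw2⟩
      refine floor_squeeze ?_ ?_ hfl
      · have : x ≤ w.re / (2:ℝ)^j := by rw [hxdef]; gcongr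
        linarith
      · have : w.re / (2:ℝ)^j ≤ y := by rw [hydef]; gcongr
        linarith
    have hzmem := hm z hz (by linarith) (min_le_left _ _) (le_max_left _ _)
    have hξmem := hm ξ hξ (by linarith) (min_le_right _ _) (le_max_right _ _)
    have hlow := kernel_lower α (1/3) hs z ξ j _ hzmem hξmem
    have hnn := dyadicKernel_nonneg α 0 z ξ
    calc 1 / A^(2+α) ≤ (8:ℝ)^(2+α) * (1/((2:ℝ)^j)^(2+α)) := hstep
      _ ≤ (8:ℝ)^(2+α) * (dyadicKernel α 0 z ξ + dyadicKernel α (1/3) z ξ) := by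
          nlinarith
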